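/- Let A ∈ ℝ^{n×n} with ⟨Ax, x⟩ = 0 for all x (A skew-symmetric) and B ∈ ℝ^{n×1}. If the pair (A, B) is controllable (Kalman rank condition), then the closed-loop matrix A − BBᵀ is Hurwitz: every eigenvalue has strictly negative real part. -/

import Mathlib

open Matrix

private lemma dot_self_nonneg {m : ℕ} (x : Fin m → ℝ) : 0 ≤ x ⬝ᵥ x :=
  Finset.sum_nonneg fun i _ => mul_self_nonneg _

/-- If `A` is skew (`xᵀ A x = 0` for all `x`) and the pair `(A, B)` is
controllable (Kalman rank condition), then `A − B Bᵀ` is Hurwitz. -/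
theorem collocated_feedback_hurwitz
    {n : ℕ} (A : Matrix (Fin n) (Fin n) ℝ) (B : Matrix (Fin n) (Fin 1) ℝ)
    (hA : ∀ x : Fin n → ℝ, x ⬝ᵥ A.mulVec x = 0)
    (hctrb : (Matrix.of fun (i : Fin n) (kj : Fin n × Fin 1) =>
      (A ^ (kj.1 : ℕ) * B) i kj.2).rank = n) :
    ∀ μ : ℂ, (∃ v : Fin n → ℂ, v ≠ 0 ∧
      ((A - B * Bᵀ).map (fun r => (r : ℂ))).mulVec v = μ • v) → μ.re < 0 := by
  rintro μ ⟨v, hv, heig⟩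
  set a : Fin n → ℝ := fun i => (v i).re with ha
  set b : Fin n → ℝ := fun i => (v i).im with hb
  -- skew-symmetry entrywise
  have hdiag : ∀ i, A i i = 0 := by
    intro i
    have := hA (Pi.single i 1)
    simpa [mulVec_single, dotProduct_single] using this
  have hskew : ∀ i j, A i j = - A j i := by
    intro i j
    by_cases h : i = j
    · subst h; simp [hdiag]
    · have h2 := hA (Pi.single i 1 + Pi.single j 1)
      simp only [mulVec_add, dotProduct_add, add_dotProduct, mulVec_single,
        dotProduct_single, single_dotProduct] at h2
      simp only [mul_one, one_mul, MulOpposite.op_one, one_smul, Matrix.col_apply] at h2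
      rw [hdiag i, hdiag j] at h2
      linarith
  -- real/imaginary parts of the eigen-equation
  have hrev : (A - B * Bᵀ).mulVec a = μ.re • a - μ.im • b := by
    funext i
    have := congrFun heig i
    have hre := congrArg Complex.re this
    simp only [mulVec, dotProduct, map_apply, Pi.smul_apply, Complex.re_sum,
      Complex.mul_re, Complex.ofReal_re, Complex.ofReal_im, Complex.smul_re] at hre ⊢
    simpa [ha, hb, zero_mul, sub_zero, Complex.smul_re] using hre
  have himv : (A - B * Bᵀ).mulVec b = μ.im • a + μ.re • b := by
    funext i
    have := congrFun heig i
    have him := congrArg Complex.im this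
    simp only [mulVec, dotProduct, map_apply, Pi.add_apply, Pi.smul_apply, smul_eq_mul,
      Complex.im_sum, Complex.mul_im, Complex.ofReal_re, Complex.ofReal_im,
      Complex.smul_im] at him ⊢
    simp only [ha, hb, zero_mul, add_zero, zero_add, mul_zero] at him ⊢
    linarith [him]
  -- quadratic form computation
  have hBB : ∀ x : Fin n → ℝ, x ⬝ᵥ (B * Bᵀ).mulVec x = (Bᵀ.mulVec x) ⬝ᵥ (Bᵀ.mulVec x) := by
    intro x
    rw [← mulVec_mulVec, dotProduct_mulVec, mulVec_transpose]
  have key : μ.re * (a ⬝ᵥ a + b ⬝ᵥ b)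
      = -((Bᵀ.mulVec a) ⬝ᵥ (Bᵀ.mulVec a) + (Bᵀ.mulVec b) ⬝ᵥ (Bᵀ.mulVec b)) := by
    have e1 : a ⬝ᵥ (A - B * Bᵀ).mulVec a + b ⬝ᵥ (A - B * Bᵀ).mulVec b
        = μ.re * (a ⬝ᵥ a + b ⬝ᵥ b) := by
      rw [hrev, himv]
      simp only [dotProduct_sub, dotProduct_add, dotProduct_smul, smul_eq_mul]
      rw [dotProduct_comm b a]
      ring
    have e2 : a ⬝ᵥ (A - B * Bᵀ).mulVec a + b ⬝ᵥ (A - B * Bᵀ).mulVec b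
        = -((Bᵀ.mulVec a) ⬝ᵥ (Bᵀ.mulVec a) + (Bᵀ.mulVec b) ⬝ᵥ (Bᵀ.mulVec b)) := by
      rw [sub_mulVec, sub_mulVec, dotProduct_sub, dotProduct_sub, hA a, hA b, hBB, hBB]
      ring
    rw [← e1, e2]
  -- positivity of the norm
  have hS : 0 < a ⬝ᵥ a + b ⬝ᵥ b := by
    rcases lt_or_eq_of_le (add_nonneg (dot_self_nonneg a) (dot_self_nonneg b)) with h | h
    · exact h
    · exfalso
      have ha0 : a ⬝ᵥ a = 0 := le_antisymm (by nlinarith [dot_self_nonneg b]) (dot_self_nonneg a)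
      have hb0 : b ⬝ᵥ b = 0 := by linarith
      have ha0' : a = 0 := dotProduct_self_eq_zero.mp ha0
      have hb0' : b = 0 := dotProduct_self_eq_zero.mp hb0
      apply hv
      funext i
      have h1 : a i = 0 := congrFun ha0' i
      have h2 : b i = 0 := congrFun hb0' i
      exact Complex.ext h1 h2
  -- μ.re ≤ 0; suppose not strict
  by_contra hcon
  push_neg at hcon
  have hBa2 : (Bᵀ.mulVec a) ⬝ᵥ (Bᵀ.mulVec a) = 0 ∧ (Bᵀ.mulVec b) ⬝ᵥ (Bᵀ.mulVec b) = 0 ∧ μ.re = 0 := by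
    have h1 := dot_self_nonneg (Bᵀ.mulVec a)
    have h2 := dot_self_nonneg (Bᵀ.mulVec b)
    have h3 : 0 ≤ μ.re * (a ⬝ᵥ a + b ⬝ᵥ b) := mul_nonneg hcon (le_of_lt hS)
    constructor
    · nlinarith
    constructor
    · nlinarith
    · nlinarith
  obtain ⟨hBa, hBb, hre0⟩ := hBa2
  have hBa0 : Bᵀ.mulVec a = 0 := dotProduct_self_eq_zero.mp hBa
  have hBb0 : Bᵀ.mulVec b = 0 := dotProduct_self_eq_zero.mp hBb
  -- A a = -μ.im b, A b = μ.im a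
  have hAa : A.mulVec a = -μ.im • b := by
    have : (B * Bᵀ).mulVec a = 0 := by
      rw [← mulVec_mulVec, hBa0, mulVec_zero]
    have h := hrev
    rw [sub_mulVec, this, sub_zero, hre0] at h
    rw [h]; funext i; simp
  have hAb : A.mulVec b = μ.im • a := by
    have : (B * Bᵀ).mulVec b = 0 := by
      rw [← mulVec_mulVec, hBb0, mulVec_zero]
    have h := himv
    rw [sub_mulVec, this, sub_zero, hre0] at h
    rw [h]; funext i; simp
  -- vecMul via skewness
  have hvm : ∀ x : Fin n → ℝ, x ᵥ* A = -(A.mulVec x) := by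
    intro x
    funext l
    simp only [vecMul, mulVec, dotProduct, Pi.neg_apply]
    rw [← Finset.sum_neg_distrib]
    apply Finset.sum_congr rfl
    intro i _
    rw [hskew i l]
    ring
  have hvma : a ᵥ* A = μ.im • b := by
    rw [hvm, hAa]; funext i; simp
  have hvmb : b ᵥ* A = -μ.im • a := by
    rw [hvm, hAb]; funext i; simp
  -- vecMul a B = 0
  have hvaB : a ᵥ* B = 0 := by rw [← mulVec_transpose, hBa0]
  have hvbB : b ᵥ* B = 0 := by rw [← mulVec_transpose, hBb0]
  -- key invariance
  have hspan : ∀ k : ℕ, ∃ c d e f : ℝ,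
      a ᵥ* (A ^ k) = c • a + d • b ∧ b ᵥ* (A ^ k) = e • a + f • b := by
    intro k
    induction k with
    | zero => exact ⟨1, 0, 0, 1, by simp, by simp⟩
    | succ k ih =>
      obtain ⟨c, d, e, f, h1, h2⟩ := ih
      refine ⟨d * -μ.im, c * μ.im, f * -μ.im, e * μ.im, ?_, ?_⟩
      · rw [pow_succ, ← vecMul_vecMul, h1, add_vecMul, smul_vecMul, smul_vecMul, hvma, hvmb]
        funext i; simp; ring
      · rw [pow_succ, ← vecMul_vecMul, h2, add_vecMul, smul_vecMul, smul_vecMul, hvma, hvmb]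
        funext i; simp; ring
  have horth : ∀ (k : ℕ), a ᵥ* (A ^ k * B) = 0 ∧ b ᵥ* (A ^ k * B) = 0 := by
    intro k
    obtain ⟨c, d, e, f, h1, h2⟩ := hspan k
    constructor
    · rw [← vecMul_vecMul, h1, add_vecMul, smul_vecMul, smul_vecMul, hvaB, hvbB]
      simp
    · rw [← vecMul_vecMul, h2, add_vecMul, smul_vecMul, smul_vecMul, hvaB, hvbB]
      simp
  -- orthogonality to the controllability matrix
  set K : Matrix (Fin n) (Fin n × Fin 1) ℝ := Matrix.of fun (i : Fin n) (kj : Fin n × Fin 1) =>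
      (A ^ (kj.1 : ℕ) * B) i kj.2 with hK
  have hKa : a ᵥ* K = 0 := by
    funext kj
    have := congrFun (horth (kj.1 : ℕ)).1 kj.2
    simpa [vecMul, dotProduct, hK] using this
  have hKb : b ᵥ* K = 0 := by
    funext kj
    have := congrFun (horth (kj.1 : ℕ)).2 kj.2
    simpa [vecMul, dotProduct, hK] using this
  -- surjectivity from rank
  have hsurj : Function.Surjective K.mulVecLin := by
    rw [← LinearMap.range_eq_top]
    apply Submodule.eq_top_of_finrank_eq
    rw [← Matrix.rank, hctrb, Module.finrank_fin_fun]
  have ha0 : a = 0 := by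
    obtain ⟨c, hc⟩ := hsurj a
    rw [Matrix.mulVecLin_apply] at hc
    have h0 : a ⬝ᵥ K.mulVec c = 0 := by
      rw [dotProduct_mulVec, hKa, zero_dotProduct]
    rw [hc] at h0
    exact dotProduct_self_eq_zero.mp h0
  have hb0 : b = 0 := by
    obtain ⟨c, hc⟩ := hsurj b
    rw [Matrix.mulVecLin_apply] at hc
    have h0 : b ⬝ᵥ K.mulVec c = 0 := by
      rw [dotProduct_mulVec, hKb, zero_dotProduct]
    rw [hc] at h0
    exact dotProduct_self_eq_zero.mp h0
  apply hv
  funext i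
  exact Complex.ext (congrFun ha0 i) (congrFun hb0 i)
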